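/- Let w : ℝ × ℝ² → ℝ² be continuous and Lipschitz in its second variable uniformly in the first, and suppose ⟨w(t, z), z⟩ = 0 for every t ∈ ℝ and every z ∈ ℝ² with ‖z‖ = 1. If γ : ℝ → ℝ² is differentiable with γ'(t) = w(t, γ(t)) for all t and ‖γ(0)‖ = 1, then ‖γ(t)‖ = 1 for all t ∈ ℝ. -/

import Mathlib

open scoped NNReal

noncomputable section

local notation "E2" => EuclideanSpace ℝ (Fin 2)

/-- The unit circle is invariant under the flow of a continuous time-dependent
vector field that is uniformly Lipschitz in the space variable and tangent to the unit
circle: if `⟨w(t,z), z⟩ = 0` whenever `‖z‖ = 1`, `γ' t = w(t, γ t)` and `‖γ 0‖ = 1`, then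
`‖γ t‖ = 1` for all `t`. -/
theorem unit_circle_invariant
    (w : ℝ × E2 → E2) (hw : Continuous w)
    (K : ℝ≥0) (hlip : ∀ t : ℝ, LipschitzWith K fun z : E2 => w (t, z))
    (htan : ∀ (t : ℝ) (z : E2), ‖z‖ = 1 → (inner ℝ (w (t, z)) z : ℝ) = 0)
    (γ : ℝ → E2) (hγ : ∀ t, HasDerivAt γ (w (t, γ t)) t)
    (hγ0 : ‖γ 0‖ = 1) :
    ∀ t : ℝ, ‖γ t‖ = 1 := by
  -- key pointwise estimate: |⟨w(t,z),z⟩| ≤ K * |‖z‖² - 1|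
  have key : ∀ (t : ℝ) (z : E2), |(inner ℝ (w (t, z)) z : ℝ)| ≤ K * |‖z‖ ^ 2 - 1| := by
    intro t z
    rcases eq_or_ne z 0 with rfl | hz
    · simp
    · have hzn : (0 : ℝ) < ‖z‖ := norm_pos_iff.mpr hz
      set u : E2 := ‖z‖⁻¹ • z with hu
      have hun : ‖u‖ = 1 := by
        rw [hu, norm_smul, norm_inv, norm_norm, inv_mul_cancel₀ hzn.ne']
      have hzu : z = ‖z‖ • u := by
        rw [hu, smul_smul, mul_inv_cancel₀ hzn.ne', one_smul]
      have h1 : (inner ℝ (w (t, z)) z : ℝ)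
          = inner ℝ (w (t, z) - w (t, u)) z + inner ℝ (w (t, u)) z := by
        rw [inner_sub_left]; ring
      have h2 : (inner ℝ (w (t, u)) z : ℝ) = 0 := by
        rw [hzu, real_inner_smul_right, htan t u hun, mul_zero]
      have h3 : ‖z - u‖ = |‖z‖ - 1| := by
        have : z - u = (1 - ‖z‖⁻¹) • z := by
          rw [hu, sub_smul, one_smul]
        rw [this, norm_smul, Real.norm_eq_abs, ← abs_of_pos hzn, ← abs_mul]
        congr 1
        field_simp
        rw [abs_of_pos hzn]; ring
      calc |(inner ℝ (w (t, z)) z : ℝ)|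
          = |(inner ℝ (w (t, z) - w (t, u)) z : ℝ)| := by rw [h1, h2, add_zero]
        _ ≤ ‖w (t, z) - w (t, u)‖ * ‖z‖ := abs_real_inner_le_norm _ _
        _ ≤ (K * ‖z - u‖) * ‖z‖ := by
            gcongr
            simpa [dist_eq_norm] using (hlip t).dist_le_mul z u
        _ = K * (|‖z‖ - 1| * ‖z‖) := by rw [h3]; ring
        _ ≤ K * (|‖z‖ - 1| * (‖z‖ + 1)) := by
            nlinarith [abs_nonneg (‖z‖ - 1), K.coe_nonneg, norm_nonneg z]
        _ = K * |‖z‖ ^ 2 - 1| := by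
            congr 1
            rw [← abs_of_nonneg (by positivity : (0:ℝ) ≤ ‖z‖ + 1), ← abs_mul]
            congr 1; ring
  set f : ℝ → ℝ := fun t => (inner ℝ (γ t) (γ t) : ℝ) - 1 with hf
  have hf' : ∀ t, HasDerivAt f (2 * (inner ℝ (w (t, γ t)) (γ t) : ℝ)) t := by
    intro t
    have := ((hγ t).inner ℝ (hγ t)).sub_const 1
    refine this.congr_deriv ?_
    rw [real_inner_comm (γ t) (w (t, γ t))]; ring
  have hfb : ∀ t, |f t| = |‖γ t‖ ^ 2 - 1| := by
    intro t
    show |(inner ℝ (γ t) (γ t) : ℝ) - 1| = _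
    rw [real_inner_self_eq_norm_sq]
  have hbound : ∀ t, ‖2 * (inner ℝ (w (t, γ t)) (γ t) : ℝ)‖ ≤ (2 * K) * ‖f t‖ + 0 := by
    intro t
    rw [Real.norm_eq_abs, Real.norm_eq_abs, abs_mul, abs_two, add_zero, hfb t]
    have := key t (γ t)
    nlinarith [abs_nonneg (‖γ t‖ ^ 2 - 1)]
  have hf0 : f 0 = 0 := by
    show (inner ℝ (γ 0) (γ 0) : ℝ) - 1 = 0
    rw [real_inner_self_eq_norm_sq, hγ0]; norm_num
  -- f vanishes everywhere
  have hfz : ∀ t, f t = 0 := by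
    intro t
    rcases le_total 0 t with ht | ht
    · have := norm_le_gronwallBound_of_norm_deriv_right_le
        (f := f) (f' := fun s => 2 * (inner ℝ (w (s, γ s)) (γ s) : ℝ))
        (δ := 0) (K := 2 * K) (ε := 0) (a := 0) (b := t)
        (fun s _ => (hf' s).continuousAt.continuousWithinAt)
        (fun s _ => (hf' s).hasDerivWithinAt)
        (by simp [hf0]) (fun s _ => hbound s) t (by constructor <;> linarith)
      rw [gronwallBound_ε0_δ0] at this
      exact norm_le_zero_iff.mp this
    · set g : ℝ → ℝ := fun s => f (-s) with hg
      have hg' : ∀ s, HasDerivAt g (-(2 * (inner ℝ (w (-s, γ (-s))) (γ (-s)) : ℝ))) s := by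
        intro s
        simpa [hg, Function.comp_def] using (hf' (-s)).comp s (hasDerivAt_neg s)
      have := norm_le_gronwallBound_of_norm_deriv_right_le
        (f := g) (f' := fun s => -(2 * (inner ℝ (w (-s, γ (-s))) (γ (-s)) : ℝ)))
        (δ := 0) (K := 2 * K) (ε := 0) (a := 0) (b := -t)
        (fun s _ => (hg' s).continuousAt.continuousWithinAt)
        (fun s _ => (hg' s).hasDerivWithinAt)
        (by simp [hg, hf0]) (fun s _ => by simpa using hbound (-s)) (-t)
        (by constructor <;> linarith)
      rw [gronwallBound_ε0_δ0] at this
      have h0 : g (-t) = 0 := norm_le_zero_iff.mp this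
      simpa [hg] using h0
  intro t
  have := hfz t
  have h2 : ‖γ t‖ ^ 2 = 1 := by
    have h2' : |‖γ t‖ ^ 2 - 1| = 0 := by rw [← hfb t, hfz t, abs_zero]
    have := abs_eq_zero.mp h2'
    linarith
  nlinarith [norm_nonneg (γ t)]
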